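/- There exists a universal constant C' > 0 such that the following holds. Let x_1, …, x_m be unit vectors in ℝ^d, let y_i ∈ {−1,+1}, set I_+ := {i ∈ [m] : y_i = +1}, and suppose the matrix X ∈ ℝ^{m×d} whose rows are the x_i satisfies ‖XX^T‖ ≤ C (spectral norm) for some C > 0. Let θ = (w_j, v_j, b_j)_{j=1}^n be parameters of a 2-layer ReLU network satisfying N_θ(x_i) ≥ 1 for all i ∈ I_+ and ∑_{j=1}^n v_j σ(b_j) ≤ 1/2. Then ∑_{j=1}^n (‖w_j‖² + v_j² + b_j²) ≥ √(|I_+|/(12C)). -/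

import Mathlib

/-- ReLU. -/
noncomputable def relu (z : ℝ) : ℝ := max z 0

/-- 2-layer ReLU network on ℝ^d. -/
noncomputable def net {d n : ℕ} (v : Fin n → ℝ) (w : Fin n → EuclideanSpace ℝ (Fin d))
    (b : Fin n → ℝ) (x : EuclideanSpace ℝ (Fin d)) : ℝ :=
  ∑ j, v j * relu ((inner ℝ (w j) x : ℝ) + b j)

/-- The Gram matrix X Xᵀ of the data points (rows x_i). -/
noncomputable def gram {d m : ℕ} (x : Fin m → EuclideanSpace ℝ (Fin d)) :
    Matrix (Fin m) (Fin m) ℝ :=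
  fun i j => (inner ℝ (x i) (x j) : ℝ)

/-- Spectral (operator) norm of a matrix. -/
noncomputable def specNorm {m : ℕ} (G : Matrix (Fin m) (Fin m) ℝ) : ℝ :=
  ‖LinearMap.toContinuousLinearMap (Matrix.toEuclideanLin G)‖

lemma sign_mul_self' (t : ℝ) : Real.sign t * t = |t| := by
  rcases lt_trichotomy t 0 with h | h | h
  · rw [Real.sign_of_neg h, abs_of_neg h]; ring
  · simp [h]
  · rw [Real.sign_of_pos h, abs_of_pos h]; ring

lemma sign_sq_le_one (t : ℝ) : Real.sign t * Real.sign t ≤ 1 := by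
  rcases lt_trichotomy t 0 with h | h | h
  · rw [Real.sign_of_neg h]; norm_num
  · simp [h]
  · rw [Real.sign_of_pos h]; norm_num

/-- Lemma B.2: if the bias contribution is small, the parameter norm is large. -/
theorem stmt12 :
    ∃ C' : ℝ, 0 < C' ∧
      ∀ (d m n : ℕ) (C : ℝ), 0 < C →
        ∀ (x : Fin m → EuclideanSpace ℝ (Fin d)) (y : Fin m → ℝ),
          (∀ i, ‖x i‖ = 1) →
          (∀ i, y i = 1 ∨ y i = -1) →
          specNorm (gram x) ≤ C →
          ∀ (v : Fin n → ℝ) (w : Fin n → EuclideanSpace ℝ (Fin d)) (b : Fin n → ℝ),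
            (∀ i, y i = 1 → 1 ≤ net v w b (x i)) →
            (∑ j, v j * relu (b j)) ≤ 1 / 2 →
            Real.sqrt ((({i : Fin m | y i = 1} : Set (Fin m)).ncard : ℝ) / (12 * C)) ≤
              ∑ j, (‖w j‖ ^ 2 + (v j) ^ 2 + (b j) ^ 2) := by
  classical
  refine ⟨1, one_pos, ?_⟩
  intro d m n C hC x y hx hy hspec v w b hnet hbias
  set P : Finset (Fin m) := Finset.univ.filter (fun i => y i = 1) with hPdef
  have hncard : (({i : Fin m | y i = 1} : Set (Fin m)).ncard : ℝ) = (P.card : ℝ) := by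
    congr 1
    rw [← Set.ncard_coe_finset]
    congr 1
    ext i; simp [hPdef]
  set p : ℝ := (P.card : ℝ) with hpdef
  have hp0 : 0 ≤ p := Nat.cast_nonneg _
  set S : ℝ := ∑ j, (‖w j‖ ^ 2 + (v j) ^ 2 + (b j) ^ 2) with hSdef
  have hS0 : 0 ≤ S := by
    apply Finset.sum_nonneg; intro j _; positivity
  -- key spectral bound: for any u, ∑_{i∈P} |⟨u, x i⟩| ≤ √(C p) ‖u‖
  have key : ∀ u : EuclideanSpace ℝ (Fin d),
      ∑ i ∈ P, |(inner ℝ u (x i) : ℝ)| ≤ Real.sqrt (C * p) * ‖u‖ := by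
    intro u
    set g : Fin m → ℝ := fun i => Real.sign ((inner ℝ (x i) u : ℝ)) with hg
    set ε : EuclideanSpace ℝ (Fin m) := WithLp.toLp 2 (fun i => if i ∈ P then g i else 0) with hεdef
    have hεapp : ∀ i, ε i = if i ∈ P then g i else 0 := fun i => rfl
    set s : EuclideanSpace ℝ (Fin d) := ∑ i ∈ P, g i • x i with hsdef
    have hεsq : ‖ε‖ ^ 2 ≤ p := by
      rw [← real_inner_self_eq_norm_sq, PiLp.inner_apply]
      simp only [RCLike.inner_apply, conj_trivial]
      calc ∑ i, ε i * ε i = ∑ i ∈ P, g i * g i := by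
            rw [← Finset.sum_subset P.subset_univ (fun i _ hi => by simp [hεapp, hi])]
            exact Finset.sum_congr rfl fun i hi => by simp [hεapp, hi]
        _ ≤ ∑ _i ∈ P, (1 : ℝ) := Finset.sum_le_sum fun i _ => sign_sq_le_one _
        _ = p := by simp [hpdef]
    set L := LinearMap.toContinuousLinearMap (Matrix.toEuclideanLin (gram x)) with hLdef
    have hLεapp : ∀ i, (L ε) i = ∑ k, gram x i k * ε k := fun i => rfl
    set D : ℝ := ∑ i ∈ P, ∑ k ∈ P, g i * (g k * (inner ℝ (x i) (x k) : ℝ)) with hD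
    have hRHS : (inner ℝ (L ε) ε : ℝ) = D := by
      rw [PiLp.inner_apply]
      simp only [RCLike.inner_apply, conj_trivial]
      rw [show (∑ i, ε i * (L ε) i) = ∑ i, (L ε) i * ε i from
        Finset.sum_congr rfl fun _ _ => mul_comm _ _]
      calc ∑ i, (L ε) i * ε i = ∑ i ∈ P, (L ε) i * g i := by
            rw [← Finset.sum_subset P.subset_univ (fun i _ hi => by simp [hεapp, hi])]
            exact Finset.sum_congr rfl fun i hi => by simp [hεapp, hi]
        _ = ∑ i ∈ P, (∑ k ∈ P, (inner ℝ (x i) (x k) : ℝ) * g k) * g i := by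
            refine Finset.sum_congr rfl fun i hi => ?_
            rw [hLεapp i]
            congr 1
            rw [← Finset.sum_subset P.subset_univ (fun k _ hk => by simp [hεapp, hk])]
            exact Finset.sum_congr rfl fun k hk => by simp [hεapp, hk, gram]
        _ = D := by
            refine Finset.sum_congr rfl fun i _ => ?_
            rw [Finset.sum_mul]
            exact Finset.sum_congr rfl fun k _ => by ring
    have hLHS : ‖s‖ ^ 2 = D := by
      rw [← real_inner_self_eq_norm_sq, hsdef]
      simp only [sum_inner, inner_sum, real_inner_smul_left, real_inner_smul_right,
        Finset.mul_sum]
      rw [hD]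
      exact Finset.sum_congr rfl fun i _ => Finset.sum_congr rfl fun k _ => by
        rw [real_inner_comm]
    have hsnorm_sq : ‖s‖ ^ 2 ≤ C * p := by
      rw [hLHS, ← hRHS]
      calc (inner ℝ (L ε) ε : ℝ) ≤ ‖L ε‖ * ‖ε‖ := real_inner_le_norm _ _
        _ ≤ (‖L‖ * ‖ε‖) * ‖ε‖ :=
            mul_le_mul_of_nonneg_right (L.le_opNorm ε) (norm_nonneg _)
        _ = ‖L‖ * ‖ε‖ ^ 2 := by ring
        _ ≤ C * p := mul_le_mul hspec hεsq (by positivity) (le_of_lt hC)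
    have hsnorm : ‖s‖ ≤ Real.sqrt (C * p) := by
      have := Real.sqrt_le_sqrt hsnorm_sq
      rwa [Real.sqrt_sq (norm_nonneg s)] at this
    have hsum : (inner ℝ s u : ℝ) = ∑ i ∈ P, |(inner ℝ u (x i) : ℝ)| := by
      rw [hsdef, sum_inner]
      refine Finset.sum_congr rfl fun i _ => ?_
      rw [real_inner_smul_left, hg, sign_mul_self', real_inner_comm]
    calc ∑ i ∈ P, |(inner ℝ u (x i) : ℝ)| = (inner ℝ s u : ℝ) := hsum.symm
      _ ≤ ‖s‖ * ‖u‖ := real_inner_le_norm _ _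
      _ ≤ Real.sqrt (C * p) * ‖u‖ :=
          mul_le_mul_of_nonneg_right hsnorm (norm_nonneg _)
  -- per-sample bound: for i ∈ P, 1/2 ≤ ∑_j |v j| * |⟨w j, x i⟩|
  have hper : ∀ i ∈ P, (1:ℝ)/2 ≤ ∑ j, |v j| * |(inner ℝ (w j) (x i) : ℝ)| := by
    intro i hi
    have hyi : y i = 1 := by simpa [hPdef] using hi
    have h1 : 1 ≤ net v w b (x i) := hnet i hyi
    have h2 : (1:ℝ)/2 ≤ ∑ j, v j * (relu ((inner ℝ (w j) (x i) : ℝ) + b j) - relu (b j)) := by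
      have : ∑ j, v j * (relu ((inner ℝ (w j) (x i) : ℝ) + b j) - relu (b j))
          = net v w b (x i) - ∑ j, v j * relu (b j) := by
        rw [net, ← Finset.sum_sub_distrib]
        congr 1; ext j; ring
      rw [this]; linarith
    refine le_trans h2 (Finset.sum_le_sum fun j _ => ?_)
    calc v j * (relu ((inner ℝ (w j) (x i) : ℝ) + b j) - relu (b j))
        ≤ |v j * (relu ((inner ℝ (w j) (x i) : ℝ) + b j) - relu (b j))| := le_abs_self _
      _ = |v j| * |relu ((inner ℝ (w j) (x i) : ℝ) + b j) - relu (b j)| := abs_mul _ _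
      _ ≤ |v j| * |(inner ℝ (w j) (x i) : ℝ)| := by
          apply mul_le_mul_of_nonneg_left ?_ (abs_nonneg _)
          have := abs_max_sub_max_le_abs ((inner ℝ (w j) (x i) : ℝ) + b j) (b j) 0
          simpa [relu] using this
  -- sum over P, swap, apply key
  have hmain : p / 2 ≤ Real.sqrt (C * p) * (S / 2) := by
    have h1 : p / 2 ≤ ∑ i ∈ P, ∑ j, |v j| * |(inner ℝ (w j) (x i) : ℝ)| := by
      calc p / 2 = ∑ _i ∈ P, (1:ℝ)/2 := by rw [Finset.sum_const, hpdef]; ring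
        _ ≤ _ := Finset.sum_le_sum hper
    have h2 : ∑ i ∈ P, ∑ j, |v j| * |(inner ℝ (w j) (x i) : ℝ)|
        = ∑ j, |v j| * ∑ i ∈ P, |(inner ℝ (w j) (x i) : ℝ)| := by
      rw [Finset.sum_comm]
      exact Finset.sum_congr rfl fun j _ => by rw [Finset.mul_sum]
    have h3 : ∑ j, |v j| * ∑ i ∈ P, |(inner ℝ (w j) (x i) : ℝ)|
        ≤ ∑ j, |v j| * (Real.sqrt (C * p) * ‖w j‖) := by
      apply Finset.sum_le_sum
      intro j _
      exact mul_le_mul_of_nonneg_left (key (w j)) (abs_nonneg _)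
    have h4 : ∑ j, |v j| * (Real.sqrt (C * p) * ‖w j‖)
        ≤ Real.sqrt (C * p) * (S / 2) := by
      have : ∑ j, |v j| * (Real.sqrt (C * p) * ‖w j‖)
          = Real.sqrt (C * p) * ∑ j, |v j| * ‖w j‖ := by
        rw [Finset.mul_sum]; exact Finset.sum_congr rfl fun j _ => by ring
      rw [this]
      apply mul_le_mul_of_nonneg_left ?_ (Real.sqrt_nonneg _)
      have hterm : ∀ j, |v j| * ‖w j‖ ≤ (‖w j‖ ^ 2 + (v j) ^ 2 + (b j) ^ 2) / 2 := by
        intro j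
        nlinarith [two_mul_le_add_sq (|v j|) (‖w j‖), sq_abs (v j), sq_nonneg (b j),
          abs_nonneg (v j), norm_nonneg (w j)]
      calc ∑ j, |v j| * ‖w j‖ ≤ ∑ j, (‖w j‖ ^ 2 + (v j) ^ 2 + (b j) ^ 2) / 2 :=
            Finset.sum_le_sum fun j _ => hterm j
        _ = S / 2 := by rw [hSdef, ← Finset.sum_div]
    linarith
  -- conclude
  rw [hncard]
  show Real.sqrt (p / (12 * C)) ≤ S
  rcases eq_or_lt_of_le hp0 with hp | hp
  · rw [← hp]
    simp [hS0]
  · -- p > 0; from hmain: p ≤ √(Cp) S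
    have hPS : p ≤ Real.sqrt (C * p) * S := by linarith
    have hsq : p ^ 2 ≤ C * p * S ^ 2 := by
      have h1 : p ^ 2 ≤ (Real.sqrt (C * p) * S) ^ 2 := by
        apply sq_le_sq' _ hPS
        nlinarith [Real.sqrt_nonneg (C * p)]
      have h2 : (Real.sqrt (C * p) * S) ^ 2 = C * p * S ^ 2 := by
        rw [mul_pow, Real.sq_sqrt (by positivity)]
      linarith
    have hpC : p ≤ C * S ^ 2 := by
      have := mul_le_mul_of_nonneg_right hsq (le_of_lt (inv_pos.mpr hp))
      rw [sq] at this
      field_simp at this ⊢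
      nlinarith
    have hfinal : p / (12 * C) ≤ S ^ 2 := by
      rw [div_le_iff₀ (by positivity)]
      nlinarith [sq_nonneg S]
    calc Real.sqrt (p / (12 * C)) ≤ Real.sqrt (S ^ 2) := Real.sqrt_le_sqrt hfinal
      _ = S := Real.sqrt_sq hS0
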